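/- For every γ ∈ (0,1) there exists a function G : [0,1] → ℝ which is continuous, monotone increasing and concave on [0,1], with G(0) = 0 and G(x) > 0 for x ∈ (0,1], together with a strictly decreasing sequence (x_n) in (0,1) converging to 0 such that x_n·G(x_n)·(−log x_n) ∈ (0,1] for every n and G(x_n·G(x_n)·(−log x_n)) / G(x_n) ≥ (1/2)·log(−log x_n) for every n. In particular, limsup_{x→0⁺} G(x·G(x)·(−log x)) / G(x) = ∞. -/

import Mathlib

open Real Filter Set

noncomputable section LossModulus

def lS (n : ℕ) : ℝ := 4 ^ (n + 2)

def xS (n : ℕ) : ℝ := Real.exp (-Real.exp (lS n))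

def uS (n : ℕ) : ℝ := lS n * Real.exp (-lS n)

def yS (n : ℕ) : ℝ := xS n * lS n

def vS (n : ℕ) : ℝ := lS n ^ 2 * Real.exp (-lS n) / 2

lemma lS_pos (n : ℕ) : 0 < lS n := by unfold lS; positivity

lemma sixteen_le_lS (n : ℕ) : 16 ≤ lS n := by
  have : (4:ℝ)^2 ≤ 4 ^ (n+2) := by
    apply pow_le_pow_right₀ (by norm_num); omega
  simpa [lS] using this.trans_eq' (by norm_num)

lemma lS_succ (n : ℕ) : lS (n + 1) = 4 * lS n := by
  simp [lS, pow_succ]; ring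

lemma lS_strictMono : StrictMono lS := by
  intro a b h
  have : (4:ℝ) ^ (a+2) < 4 ^ (b+2) := by
    apply pow_lt_pow_right₀ (by norm_num); omega
  simpa [lS]

lemma lS_ge (k : ℕ) : 2 * (k:ℝ) + 2 ≤ lS k := by
  have h1 : (k:ℝ) + 1 ≤ 4 ^ k := by
    have := Nat.lt_two_pow_self (n := k)
    have h2 : (2:ℝ) ^ k ≤ 4 ^ k := by
      apply pow_le_pow_left₀ (by norm_num) (by norm_num)
    have : (k:ℝ) + 1 ≤ 2 ^ k := by exact_mod_cast this
    linarith
  have : lS k = 16 * 4 ^ k := by simp [lS, pow_add]; ring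
  nlinarith [pow_pos (show (0:ℝ) < 4 by norm_num) k]

/-- core exponential estimate -/
lemma cube_le_exp {l : ℝ} (hl : 0 ≤ l) : l ^ 3 ≤ 27 * Real.exp l := by
  have h := Real.add_one_le_exp (l / 3)
  have h3 : Real.exp l = (Real.exp (l/3)) ^ 3 := by
    rw [← Real.exp_nat_mul]; ring_nf
  have : (l/3)^3 ≤ (Real.exp (l/3))^3 := by
    apply pow_le_pow_left₀ (by positivity); linarith
  rw [h3]; nlinarith [this]

lemma eight_l_le_exp {l : ℝ} (hl : 16 ≤ l) : 8 * l ≤ Real.exp l := by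
  have h := cube_le_exp (by linarith : (0:ℝ) ≤ l)
  have h2 : (16:ℝ) * 16 ≤ l * l := by nlinarith
  have h3 : 216 * l ≤ l ^ 3 := by nlinarith
  linarith

lemma exp_gap {l : ℝ} (hl : 16 ≤ l) :
    3 * l + 1 ≤ Real.exp (4 * l) - Real.exp l := by
  have h1 : Real.exp (4 * l) = Real.exp l * Real.exp (3 * l) := by
    rw [← Real.exp_add]; ring_nf
  have h2 := Real.add_one_le_exp (3 * l)
  have h3 := eight_l_le_exp hl
  have h4 : (0:ℝ) < Real.exp l := Real.exp_pos _
  nlinarith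

lemma sixteen_l_le_exp3 {l : ℝ} (hl : 16 ≤ l) : 16 * l ≤ Real.exp (3 * l) := by
  have h1 : Real.exp (3 * l) = Real.exp l * Real.exp (2 * l) := by
    rw [← Real.exp_add]; ring_nf
  have h2 := Real.add_one_le_exp (2 * l)
  have h3 := eight_l_le_exp hl
  have h4 : (0:ℝ) < Real.exp l := Real.exp_pos _
  nlinarith

lemma xS_pos (n : ℕ) : 0 < xS n := Real.exp_pos _

lemma xS_lt_one (n : ℕ) : xS n < 1 := by
  rw [xS, Real.exp_lt_one_iff, neg_lt, neg_zero]; exact Real.exp_pos _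

lemma uS_pos (n : ℕ) : 0 < uS n := by
  have := lS_pos n; unfold uS; positivity

lemma vS_pos (n : ℕ) : 0 < vS n := by
  have := lS_pos n; unfold vS; positivity

lemma uS_lt_vS (n : ℕ) : uS n < vS n := by
  have h := sixteen_le_lS n
  have hA : (0:ℝ) < Real.exp (-lS n) := Real.exp_pos _
  have key : 0 < lS n * Real.exp (-lS n) * (lS n - 2) :=
    mul_pos (mul_pos (lS_pos n) hA) (by linarith)
  unfold uS vS; nlinarith

lemma xS_lt_yS (n : ℕ) : xS n < yS n := by
  have h := sixteen_le_lS n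
  have := xS_pos n
  unfold yS; nlinarith

lemma yS_pos (n : ℕ) : 0 < yS n := (xS_pos n).trans (xS_lt_yS n)

lemma yS_le_one (n : ℕ) : yS n ≤ 1 := by
  have h1 : lS n ≤ Real.exp (lS n) := by
    have := Real.add_one_le_exp (lS n); linarith
  have h2 : Real.exp (lS n) ≤ Real.exp (Real.exp (lS n)) := by
    have := Real.add_one_le_exp (Real.exp (lS n)); linarith
  have h3 : xS n * Real.exp (Real.exp (lS n)) = 1 := by
    rw [xS, ← Real.exp_add]; simp
  have h4 := xS_pos n
  calc yS n = xS n * lS n := rfl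
    _ ≤ xS n * Real.exp (Real.exp (lS n)) := by nlinarith
    _ = 1 := h3

/-- key exponential comparison between consecutive scales. -/
lemma key_exp (n : ℕ) :
    2 * (Real.exp (-lS n) * xS (n+1)) ≤ Real.exp (-(4 * lS n)) * xS n := by
  have h := sixteen_le_lS n
  have hgap := exp_gap h
  -- exp(4l) - exp l ≥ 3l+1, so exp(-(l) - exp(4l)) * exp(3l + exp(4l) - exp l) ≤ ...
  have hL : Real.exp (-lS n) * xS (n+1) = Real.exp (-lS n - Real.exp (4 * lS n)) := by
    rw [xS, lS_succ, ← Real.exp_add]; ring_nf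
  have hR : Real.exp (-(4 * lS n)) * xS n =
      Real.exp (-(4 * lS n) - Real.exp (lS n)) := by
    rw [xS, ← Real.exp_add]; ring_nf
  rw [hL, hR, ← sub_nonneg]
  have hdiff : (-(4 * lS n) - Real.exp (lS n)) - (-lS n - Real.exp (4 * lS n)) =
      Real.exp (4 * lS n) - Real.exp (lS n) - 3 * lS n := by ring
  have h2 : Real.exp (-lS n - Real.exp (4 * lS n)) * 2 ≤
      Real.exp (-lS n - Real.exp (4 * lS n)) *
        Real.exp ((-(4 * lS n) - Real.exp (lS n)) - (-lS n - Real.exp (4 * lS n))) := by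
    apply mul_le_mul_of_nonneg_left _ (Real.exp_pos _).le
    rw [hdiff]
    have := Real.add_one_le_exp (Real.exp (4 * lS n) - Real.exp (lS n) - 3 * lS n)
    linarith
  rw [← Real.exp_add] at h2
  ring_nf at h2 ⊢
  linarith

lemma yS_succ_le (n : ℕ) : yS (n+1) ≤ xS n / 2 := by
  have h := sixteen_le_lS n
  have hk := key_exp n
  have hx1 : 0 < xS (n+1) := xS_pos (n+1)
  have hx0 : 0 < xS n := xS_pos n
  have e1 : 2 * xS (n+1) ≤ Real.exp (-(3 * lS n)) * xS n := by
    have h5 := mul_le_mul_of_nonneg_left hk (Real.exp_pos (lS n)).le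
    have h6 : Real.exp (lS n) * (2 * (Real.exp (-lS n) * xS (n+1))) = 2 * xS (n+1) := by
      rw [show Real.exp (lS n) * (2 * (Real.exp (-lS n) * xS (n+1)))
          = 2 * (Real.exp (lS n) * Real.exp (-lS n)) * xS (n+1) by ring,
        ← Real.exp_add]
      simp
    have h7 : Real.exp (lS n) * (Real.exp (-(4 * lS n)) * xS n)
        = Real.exp (-(3 * lS n)) * xS n := by
      rw [← mul_assoc, ← Real.exp_add]; ring_nf
    rw [h6, h7] at h5; exact h5
  have e2 : 4 * lS n * Real.exp (-(3 * lS n)) ≤ 1 := by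
    have h16 := sixteen_l_le_exp3 h
    rw [Real.exp_neg, ← div_eq_mul_inv, div_le_one (Real.exp_pos _)]
    linarith
  have h8 := mul_le_mul_of_nonneg_left e1 (by positivity : (0:ℝ) ≤ 4 * lS n)
  have h9 := mul_le_mul_of_nonneg_right e2 hx0.le
  have hyd : yS (n+1) = xS (n+1) * (4 * lS n) := by rw [yS, lS_succ]
  rw [hyd]
  nlinarith [h8, h9]

lemma vS_succ_le (n : ℕ) : vS (n+1) ≤ uS n / 2 := by
  have h := sixteen_le_lS n
  have h16 := sixteen_l_le_exp3 h
  have e1 : 16 * lS n * Real.exp (-(4 * lS n)) ≤ Real.exp (-lS n) := by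
    have h5 := mul_le_mul_of_nonneg_right h16 (Real.exp_pos (-(4 * lS n))).le
    have h7 : Real.exp (3 * lS n) * Real.exp (-(4 * lS n)) = Real.exp (-lS n) := by
      rw [← Real.exp_add]; ring_nf
    rw [h7] at h5; exact h5
  have hA : (0:ℝ) < Real.exp (-(4 * lS n)) := Real.exp_pos _
  have hl := lS_pos n
  unfold vS uS
  rw [lS_succ]
  nlinarith


def tauS (m : ℕ) : ℝ := if m % 2 = 0 then yS (m / 2) else xS (m / 2)

def gS (m : ℕ) : ℝ := if m % 2 = 0 then vS (m / 2) else uS (m / 2)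

lemma tauS_even (n : ℕ) : tauS (2 * n) = yS n := by
  have h1 : (2 * n) % 2 = 0 := by omega
  have h2 : (2 * n) / 2 = n := by omega
  simp [tauS, h1, h2]

lemma tauS_odd (n : ℕ) : tauS (2 * n + 1) = xS n := by
  have h1 : (2 * n + 1) % 2 = 1 := by omega
  have h2 : (2 * n + 1) / 2 = n := by omega
  simp [tauS, h1, h2]

lemma gS_even (n : ℕ) : gS (2 * n) = vS n := by
  have h1 : (2 * n) % 2 = 0 := by omega
  have h2 : (2 * n) / 2 = n := by omega
  simp [gS, h1, h2]

lemma gS_odd (n : ℕ) : gS (2 * n + 1) = uS n := by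
  have h1 : (2 * n + 1) % 2 = 1 := by omega
  have h2 : (2 * n + 1) / 2 = n := by omega
  simp [gS, h1, h2]

lemma tauS_pos (m : ℕ) : 0 < tauS m := by
  unfold tauS; split
  · exact yS_pos _
  · exact xS_pos _

lemma gS_pos (m : ℕ) : 0 < gS m := by
  unfold gS; split
  · exact vS_pos _
  · exact uS_pos _

lemma tauS_succ_lt (m : ℕ) : tauS (m + 1) < tauS m := by
  obtain ⟨k, rfl | rfl⟩ := Nat.even_or_odd' m
  · rw [tauS_even, show 2 * k + 1 = 2 * k + 1 from rfl, tauS_odd]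
    exact xS_lt_yS k
  · rw [tauS_odd, show 2 * k + 1 + 1 = 2 * (k + 1) from by ring, tauS_even]
    have := yS_succ_le k
    have := xS_pos k
    linarith
  
lemma tauS_strictAnti : StrictAnti tauS :=
  strictAnti_nat_of_succ_lt tauS_succ_lt

lemma gS_succ_lt (m : ℕ) : gS (m + 1) < gS m := by
  obtain ⟨k, rfl | rfl⟩ := Nat.even_or_odd' m
  · rw [gS_even, gS_odd]; exact uS_lt_vS k
  · rw [gS_odd, show 2 * k + 1 + 1 = 2 * (k + 1) from by ring, gS_even]
    have := vS_succ_le k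
    have := uS_pos k
    linarith

lemma gS_le (m : ℕ) : gS m ≤ 27 / (m + 1) := by
  have hl := sixteen_le_lS (m / 2)
  have hl0 : (0:ℝ) < lS (m / 2) := lS_pos _
  have hA : (0:ℝ) < Real.exp (-lS (m / 2)) := Real.exp_pos _
  have hcube := cube_le_exp (le_of_lt hl0)
  -- l^2 * exp (-l) ≤ 27 / l
  have hinv : Real.exp (-lS (m/2)) * Real.exp (lS (m/2)) = 1 := by
    rw [← Real.exp_add]; simp
  have h2 : lS (m/2) ^ 2 * Real.exp (-lS (m/2)) ≤ 27 / lS (m/2) := by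
    rw [le_div_iff₀ hl0]
    calc lS (m/2) ^ 2 * Real.exp (-lS (m/2)) * lS (m/2)
        = lS (m/2) ^ 3 * Real.exp (-lS (m/2)) := by ring
      _ ≤ 27 * Real.exp (lS (m/2)) * Real.exp (-lS (m/2)) := by
          apply mul_le_mul_of_nonneg_right hcube hA.le
      _ = 27 := by rw [mul_assoc, mul_comm (Real.exp (lS (m/2))), hinv, mul_one]
  have hml : (m:ℝ) + 1 ≤ lS (m / 2) := by
    have hm : (m:ℝ) ≤ 2 * ((m / 2 : ℕ) : ℝ) + 1 := by
      have : m ≤ 2 * (m / 2) + 1 := by omega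
      exact_mod_cast this
    have := lS_ge (m / 2)
    linarith
  have h3 : 27 / lS (m / 2) ≤ 27 / ((m:ℝ) + 1) := by
    apply div_le_div_of_nonneg_left (by norm_num) (by positivity) hml
  refine le_trans ?_ (le_trans h2 h3)
  unfold gS; split
  · unfold vS; nlinarith
  · unfold uS; nlinarith [mul_le_mul_of_nonneg_right (show lS (m/2) * 1 ≤ lS (m/2) * lS (m/2) by nlinarith) hA.le]

lemma gS_tendsto : Tendsto gS atTop (nhds 0) := by
  apply squeeze_zero (fun m => (gS_pos m).le) gS_le
  have h := tendsto_one_div_add_atTop_nhds_zero_nat (𝕜 := ℝ)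
  have := h.const_mul (27:ℝ)
  simpa [div_eq_mul_inv] using this

def sS : ℕ → ℝ
  | 0 => 0
  | (m+1) => (gS m - gS (m+1)) / (tauS m - tauS (m+1))

lemma sS_succ_pos (m : ℕ) : 0 < sS (m + 1) := by
  show 0 < (gS m - gS (m+1)) / (tauS m - tauS (m+1))
  apply div_pos <;> [skip; skip] <;>
    [linarith [gS_succ_lt m]; linarith [tauS_succ_lt m]]

lemma sS_nonneg (m : ℕ) : 0 ≤ sS m := by
  cases m with
  | zero => exact le_refl 0
  | succ k => exact (sS_succ_pos k).le

lemma sS_eq (m : ℕ) : sS (m+1) = (gS m - gS (m+1)) / (tauS m - tauS (m+1)) := rfl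

lemma sS_odd (n : ℕ) : sS (2*n+1) = (vS n - uS n) / (yS n - xS n) := by
  rw [sS_eq, gS_even, gS_odd, tauS_even, tauS_odd]

lemma sS_even (n : ℕ) : sS (2*n+2) = (uS n - vS (n+1)) / (xS n - yS (n+1)) := by
  have h : sS (2*n+2) = (gS (2*n+1) - gS (2*n+2)) / (tauS (2*n+1) - tauS (2*n+2)) := rfl
  rw [h, gS_odd, show 2*n+2 = 2*(n+1) from by ring, gS_even, tauS_odd, tauS_even]

lemma slope_A1 (n : ℕ) : sS (2*n+1) ≤ uS n / (2 * xS n) := by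
  rw [sS_odd, div_le_div_iff₀ (by linarith [xS_lt_yS n]) (by linarith [xS_pos n])]
  have hp : 0 < lS n * Real.exp (-lS n) * xS n :=
    mul_pos (mul_pos (lS_pos n) (Real.exp_pos _)) (xS_pos n)
  unfold vS uS yS
  nlinarith

lemma slope_A2 (n : ℕ) : uS n / (2 * xS n) ≤ sS (2*n+2) := by
  rw [sS_even, div_le_div_iff₀ (by linarith [xS_pos n]) (by linarith [yS_succ_le n, xS_pos n])]
  have h1 := mul_le_mul_of_nonneg_right
    (show 2 * vS (n+1) ≤ uS n by linarith [vS_succ_le n]) (xS_pos n).le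
  have h2 : 0 < uS n * yS (n+1) := mul_pos (uS_pos n) (yS_pos (n+1))
  nlinarith

lemma slope_B1 (n : ℕ) : sS (2*n+2) ≤ 2 * uS n / xS n := by
  rw [sS_even, div_le_div_iff₀ (by linarith [yS_succ_le n, xS_pos n]) (xS_pos n)]
  have h1 := mul_le_mul_of_nonneg_left
    (show xS n / 2 ≤ xS n - yS (n+1) by linarith [yS_succ_le n]) (uS_pos n).le
  have h2 : 0 < vS (n+1) * xS n := mul_pos (vS_pos (n+1)) (xS_pos n)
  nlinarith

lemma slope_B2 (n : ℕ) : 2 * uS n / xS n ≤ sS (2*n+3) := by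
  have step1 : uS (n+1) / (4 * xS (n+1)) ≤ sS (2*n+3) := by
    have h : sS (2*n+3) = (vS (n+1) - uS (n+1)) / (yS (n+1) - xS (n+1)) := by
      rw [show 2*n+3 = 2*(n+1)+1 from by ring, sS_odd]
    rw [h, div_le_div_iff₀ (by linarith [xS_pos (n+1)]) (by linarith [xS_lt_yS (n+1)])]
    have hp : (0:ℝ) ≤ lS (n+1) * Real.exp (-lS (n+1)) * xS (n+1) * (lS (n+1) - 3) := by
      have h16 := sixteen_le_lS (n+1)
      exact mul_nonneg (mul_nonneg (mul_nonneg (by linarith) (Real.exp_pos _).le)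
        (xS_pos _).le) (by linarith)
    unfold vS uS yS
    nlinarith
  have step2 : 2 * uS n / xS n ≤ uS (n+1) / (4 * xS (n+1)) := by
    rw [div_le_div_iff₀ (xS_pos n) (by linarith [xS_pos (n+1)])]
    have hk := mul_le_mul_of_nonneg_left (key_exp n)
      (show (0:ℝ) ≤ 4 * lS n by linarith [lS_pos n])
    unfold uS
    rw [lS_succ]
    nlinarith
  linarith

lemma sS_le_succ (m : ℕ) : sS m ≤ sS (m + 1) := by
  cases m with
  | zero => exact (sS_succ_pos 0).le
  | succ m =>
    obtain ⟨k, rfl | rfl⟩ := Nat.even_or_odd' m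
    · exact le_trans (slope_A1 k) (slope_A2 k)
    · exact le_trans (slope_B1 k) (slope_B2 k)

lemma sS_mono : Monotone sS := monotone_nat_of_le_succ sS_le_succ

def dS (m : ℕ) : ℝ := sS (m+1) - sS m

lemma dS_nonneg (m : ℕ) : 0 ≤ dS m := by
  have := sS_le_succ m; unfold dS; linarith

def cS (m : ℕ) : ℝ := gS m - tauS m * sS m

lemma cS_nonneg (m : ℕ) : 0 ≤ cS m := by
  unfold cS
  rcases m with _ | m
  · simpa [sS] using (gS_pos 0).le
  obtain ⟨k, rfl | rfl⟩ := Nat.even_or_odd' m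
  · -- index 2k+1 : x_k * s ≤ u_k
    rw [tauS_odd, gS_odd]
    have h1 := slope_A1 k
    have h2 := mul_le_mul_of_nonneg_left h1 (xS_pos k).le
    have hx : xS k ≠ 0 := (xS_pos k).ne'
    have h3 : xS k * (uS k / (2 * xS k)) = uS k / 2 := by
      field_simp
    rw [h3] at h2
    have := uS_pos k
    linarith
  · -- index 2k+2 : y_{k+1} * s ≤ v_{k+1}
    rw [show 2*k+1+1 = 2*(k+1) from by ring, tauS_even, gS_even]
    have hs := sS_even k
    rw [show 2*(k+1) = 2*k+2 from by ring, hs]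
    rw [sub_nonneg, mul_div_assoc', div_le_iff₀ (by linarith [yS_succ_le k, xS_pos k])]
    have hk := mul_le_mul_of_nonneg_left (key_exp k)
      (show (0:ℝ) ≤ 4 * lS k ^ 2 by positivity)
    have h2 : 0 < vS (k+1) * yS (k+1) := mul_pos (vS_pos (k+1)) (yS_pos (k+1))
    unfold vS uS yS
    rw [lS_succ]
    nlinarith [hk, mul_nonneg (mul_nonneg (sq_nonneg (lS k))
      (Real.exp_pos (-(4*lS k))).le) (xS_pos k).le]

lemma dS_mul_tauS (m : ℕ) : dS m * tauS m = cS m - cS (m+1) := by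
  have hne : tauS m - tauS (m+1) ≠ 0 := by
    have := tauS_succ_lt m; linarith
  have h : sS (m+1) * (tauS m - tauS (m+1)) = gS m - gS (m+1) := by
    rw [sS_eq, div_mul_cancel₀ _ hne]
  unfold dS cS
  nlinarith [h]

lemma cS_tendsto : Tendsto cS atTop (nhds 0) := by
  have hle : ∀ m, cS m ≤ gS m := by
    intro m
    unfold cS
    have := mul_nonneg (tauS_pos m).le (sS_nonneg m)
    linarith
  exact squeeze_zero cS_nonneg hle gS_tendsto

lemma hasSum_tail (m : ℕ) :
    HasSum (fun k => dS (m + k) * tauS (m + k)) (cS m) := by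
  have hnn : ∀ k, 0 ≤ dS (m + k) * tauS (m + k) := fun k =>
    mul_nonneg (dS_nonneg _) (tauS_pos _).le
  rw [hasSum_iff_tendsto_nat_of_nonneg hnn]
  have hsum : ∀ N, ∑ k ∈ Finset.range N, dS (m + k) * tauS (m + k)
      = cS m - cS (m + N) := by
    intro N
    have := Finset.sum_range_sub' (fun i => cS (m + i)) N
    simp only [Nat.add_zero] at this
    rw [← this]
    apply Finset.sum_congr rfl
    intro i _
    exact dS_mul_tauS (m + i)
  simp only [hsum]
  have h1 : Tendsto (fun N => cS (m + N)) atTop (nhds 0) := by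
    simpa only [Function.comp_def, Nat.add_comm m] using cS_tendsto.comp (tendsto_add_atTop_nat m)
  simpa using tendsto_const_nhds.sub h1

lemma summable_dS_tauS : Summable (fun k => dS k * tauS k) := by
  have := (hasSum_tail 0).summable
  simpa using this

/-- the modulus of continuity -/
def GG (t : ℝ) : ℝ := ∑' m, dS m * min (max t 0) (tauS m)

lemma term_nonneg (t : ℝ) (m : ℕ) : 0 ≤ dS m * min (max t 0) (tauS m) :=
  mul_nonneg (dS_nonneg m) (le_min (le_max_right t 0) (tauS_pos m).le)

lemma term_le (t : ℝ) (m : ℕ) : dS m * min (max t 0) (tauS m) ≤ dS m * tauS m :=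
  mul_le_mul_of_nonneg_left (min_le_right _ _) (dS_nonneg m)

lemma summable_GG (t : ℝ) : Summable (fun m => dS m * min (max t 0) (tauS m)) :=
  Summable.of_nonneg_of_le (term_nonneg t) (term_le t) summable_dS_tauS

lemma GG_monotone : Monotone GG := by
  intro a b hab
  apply Summable.tsum_le_tsum _ (summable_GG a) (summable_GG b)
  intro m
  apply mul_le_mul_of_nonneg_left _ (dS_nonneg m)
  exact min_le_min (max_le_max hab (le_refl 0)) (le_refl _)

lemma GG_zero : GG 0 = 0 := by
  unfold GG
  have : ∀ m, dS m * min (max (0:ℝ) 0) (tauS m) = 0 := by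
    intro m
    rw [max_self, min_eq_left (tauS_pos m).le, mul_zero]
  simp only [this, tsum_zero]

lemma GG_continuous : Continuous GG := by
  apply continuous_tsum
  · intro m
    exact continuous_const.mul ((continuous_id.max continuous_const).min
      continuous_const)
  · exact summable_dS_tauS
  · intro m t
    rw [Real.norm_eq_abs, abs_of_nonneg (term_nonneg t m)]
    exact term_le t m

lemma GG_eval (m : ℕ) : GG (tauS m) = gS m := by
  have hmax : max (tauS m) 0 = tauS m := max_eq_left (tauS_pos m).le
  have hterm : (fun k => dS k * min (max (tauS m) 0) (tauS k))
      = fun k => dS k * min (tauS m) (tauS k) := by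
    funext k; rw [hmax]
  unfold GG
  rw [hterm]
  have hsummable : Summable (fun k => dS k * min (tauS m) (tauS k)) := by
    have := summable_GG (tauS m)
    rwa [hmax] at this
  rw [← Summable.sum_add_tsum_nat_add m hsummable]
  have hfin : ∑ i ∈ Finset.range m, dS i * min (tauS m) (tauS i)
      = sS m * tauS m := by
    have h1 : ∀ i ∈ Finset.range m, dS i * min (tauS m) (tauS i) = dS i * tauS m := by
      intro i hi
      rw [Finset.mem_range] at hi
      rw [min_eq_left (tauS_strictAnti hi).le]
    rw [Finset.sum_congr rfl h1, ← Finset.sum_mul]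
    congr 1
    have := Finset.sum_range_sub sS m
    unfold dS
    rw [this]
    simp [sS]
  have htail : ∑' k, dS (k + m) * min (tauS m) (tauS (k + m)) = cS m := by
    have h1 : (fun k => dS (k + m) * min (tauS m) (tauS (k + m)))
        = fun k => dS (m + k) * tauS (m + k) := by
      funext k
      rw [Nat.add_comm k m, min_eq_right (tauS_strictAnti.antitone (Nat.le_add_right m k))]
    rw [h1, (hasSum_tail m).tsum_eq]
  rw [hfin, htail]
  unfold cS
  ring

lemma GG_xS (n : ℕ) : GG (xS n) = uS n := by
  have := GG_eval (2*n+1)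
  rwa [tauS_odd, gS_odd] at this

lemma GG_yS (n : ℕ) : GG (yS n) = vS n := by
  have := GG_eval (2*n)
  rwa [tauS_even, gS_even] at this

lemma GG_concave : ConcaveOn ℝ (Set.Icc (0:ℝ) 1) GG := by
  refine ⟨convex_Icc 0 1, ?_⟩
  intro p hp q hq a b ha hb hab
  simp only [smul_eq_mul]
  have hmem : a * p + b * q ∈ Set.Icc (0:ℝ) 1 := by
    constructor
    · have := mul_nonneg ha hp.1; have := mul_nonneg hb hq.1; linarith
    · have := mul_le_mul_of_nonneg_left hp.2 ha
      have := mul_le_mul_of_nonneg_left hq.2 hb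
      linarith
  have hmaxp : max p 0 = p := max_eq_left hp.1
  have hmaxq : max q 0 = q := max_eq_left hq.1
  have hmaxpq : max (a * p + b * q) 0 = a * p + b * q := max_eq_left hmem.1
  have key : ∀ m, a * (dS m * min p (tauS m)) + b * (dS m * min q (tauS m))
      ≤ dS m * min (a * p + b * q) (tauS m) := by
    intro m
    have h1 : a * (dS m * min p (tauS m)) + b * (dS m * min q (tauS m))
        = dS m * (a * min p (tauS m) + b * min q (tauS m)) := by ring
    rw [h1]
    apply mul_le_mul_of_nonneg_left _ (dS_nonneg m)
    apply le_min
    · have h2 := mul_le_mul_of_nonneg_left (min_le_left p (tauS m)) ha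
      have h3 := mul_le_mul_of_nonneg_left (min_le_left q (tauS m)) hb
      linarith
    · have h2 := mul_le_mul_of_nonneg_left (min_le_right p (tauS m)) ha
      have h3 := mul_le_mul_of_nonneg_left (min_le_right q (tauS m)) hb
      have h4 : a * tauS m + b * tauS m = tauS m := by
        rw [← add_mul, hab, one_mul]
      linarith
  have hsp : Summable (fun m => dS m * min p (tauS m)) := by
    have := summable_GG p; rwa [hmaxp] at this
  have hsq : Summable (fun m => dS m * min q (tauS m)) := by
    have := summable_GG q; rwa [hmaxq] at this
  have hspq : Summable (fun m => dS m * min (a * p + b * q) (tauS m)) := by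
    have := summable_GG (a * p + b * q); rwa [hmaxpq] at this
  have hGGp : GG p = ∑' m, dS m * min p (tauS m) := by
    unfold GG; rw [hmaxp]
  have hGGq : GG q = ∑' m, dS m * min q (tauS m) := by
    unfold GG; rw [hmaxq]
  have hGGpq : GG (a * p + b * q) = ∑' m, dS m * min (a * p + b * q) (tauS m) := by
    unfold GG; rw [hmaxpq]
  rw [hGGp, hGGq, hGGpq, ← Summable.tsum_mul_left a hsp, ← Summable.tsum_mul_left b hsq,
    ← Summable.tsum_add (hsp.mul_left a) (hsq.mul_left b)]
  exact Summable.tsum_le_tsum key ((hsp.mul_left a).add (hsq.mul_left b)) hspq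

lemma xS_tendsto : Tendsto xS atTop (nhds 0) := by
  unfold xS
  apply Real.tendsto_exp_atBot.comp
  apply tendsto_neg_atBot_iff.mpr
  apply Real.tendsto_exp_atTop.comp
  apply tendsto_atTop_mono (fun k => ?_) tendsto_natCast_atTop_atTop
  have := lS_ge k
  linarith

lemma xS_strictAnti : StrictAnti xS := by
  intro a b h
  unfold xS
  apply Real.exp_lt_exp.mpr
  have := lS_strictMono h
  have := Real.exp_lt_exp.mpr this
  linarith

lemma GG_pos {t : ℝ} (ht : 0 < t) : 0 < GG t := by
  obtain ⟨n, hn⟩ := ((tendsto_order.1 xS_tendsto).2 t ht).exists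
  have h1 : GG (xS n) ≤ GG t := GG_monotone hn.le
  rw [GG_xS] at h1
  linarith [uS_pos n]

lemma neg_log_xS (n : ℕ) : -Real.log (xS n) = Real.exp (lS n) := by
  rw [xS, Real.log_exp, neg_neg]

lemma arg_eq (n : ℕ) : xS n * GG (xS n) * (-Real.log (xS n)) = yS n := by
  rw [GG_xS, neg_log_xS, uS, yS]
  have h : Real.exp (-lS n) * Real.exp (lS n) = 1 := by
    rw [← Real.exp_add]; simp
  calc xS n * (lS n * Real.exp (-lS n)) * Real.exp (lS n)
      = xS n * lS n * (Real.exp (-lS n) * Real.exp (lS n)) := by ring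
    _ = xS n * lS n := by rw [h, mul_one]

lemma ratio_eq (n : ℕ) : GG (yS n) / GG (xS n) = lS n / 2 := by
  rw [GG_xS, GG_yS, vS, uS]
  have hu : lS n * Real.exp (-lS n) ≠ 0 := (uS_pos n).ne'
  field_simp

lemma half_log_eq (n : ℕ) : (1/2 : ℝ) * Real.log (-Real.log (xS n)) = lS n / 2 := by
  rw [neg_log_xS, Real.log_exp]; ring

end LossModulus


/-- Proposition 4.1: there is a continuous, monotone, concave modulus `G` on `[0,1]`,
vanishing at `0` and positive on `(0,1]`, and a strictly decreasing sequence `xₙ → 0`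
along which `G(xₙ · G(xₙ) · (−log xₙ)) / G(xₙ) ≥ (1/2)·log(−log xₙ)`; in particular
`limsup_{x→0⁺} G(x·G(x)·(−log x))/G(x) = ∞` (expressed via frequently). -/
theorem loss_modulus_construction (γ : ℝ) (hγ0 : 0 < γ) (hγ1 : γ < 1) :
    ∃ G : ℝ → ℝ,
      ContinuousOn G (Set.Icc 0 1) ∧
      MonotoneOn G (Set.Icc 0 1) ∧
      ConcaveOn ℝ (Set.Icc 0 1) G ∧
      G 0 = 0 ∧
      (∀ x ∈ Set.Ioc (0:ℝ) 1, 0 < G x) ∧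
      (∃ x : ℕ → ℝ,
        StrictAnti x ∧
        (∀ n, x n ∈ Set.Ioo (0:ℝ) 1) ∧
        Filter.Tendsto x Filter.atTop (nhds 0) ∧
        (∀ n, x n * G (x n) * (-Real.log (x n)) ∈ Set.Ioc (0:ℝ) 1) ∧
        (∀ n, (1/2) * Real.log (-Real.log (x n)) ≤
            G (x n * G (x n) * (-Real.log (x n))) / G (x n))) ∧
      (∀ M : ℝ, ∃ᶠ x in nhdsWithin 0 (Set.Ioi 0),
        M ≤ G (x * G x * (-Real.log x)) / G x) := by
  refine ⟨GG, GG_continuous.continuousOn, GG_monotone.monotoneOn _, GG_concave,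
    GG_zero, fun t ht => GG_pos ht.1, ⟨xS, xS_strictAnti,
      fun n => ⟨xS_pos n, xS_lt_one n⟩, xS_tendsto, ?_, ?_⟩, ?_⟩
  · intro n
    rw [arg_eq]
    exact ⟨yS_pos n, yS_le_one n⟩
  · intro n
    rw [arg_eq, half_log_eq, ratio_eq]
  · -- frequently
    intro M
    have hmap : Tendsto xS atTop (nhdsWithin 0 (Set.Ioi 0)) :=
      tendsto_nhdsWithin_of_tendsto_nhds_of_eventually_within _ xS_tendsto
        (Eventually.of_forall fun n => xS_pos n)
    apply hmap.frequently
    apply Filter.Eventually.frequently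
    obtain ⟨N, hN⟩ := exists_nat_gt M
    filter_upwards [eventually_ge_atTop N] with n hn
    rw [arg_eq, ratio_eq]
    have h1 := lS_ge n
    have h2 : (N:ℝ) ≤ (n:ℝ) := by exact_mod_cast hn
    linarith
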